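/- arXiv:math/9410219 — 2 statements merged into one kernel-verified Lean document; each statement's English description precedes it below -/
import Mathlib

section
/- The space of pairs (p,q) of coprime complex polynomials with p monic of degree d and deg q < d (equivalently, Hol*_d(S²,S²)) is path-connected for every d ≥ 1. -/
open Polynomial

/-- The monic polynomial `X^d + ∑ aᵢ Xⁱ` determined by its `d` non-leading coefficients. -/
noncomputable def monicOfCoeffs (d : ℕ) (a : Fin d → ℂ) : Polynomial ℂ :=
  X ^ d + ∑ i : Fin d, C (a i) * X ^ (i : ℕ)

/-- The polynomial `∑ bᵢ Xⁱ` of degree `< d` determined by its coefficients. -/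
noncomputable def polyOfCoeffs {d : ℕ} (b : Fin d → ℂ) : Polynomial ℂ :=
  ∑ i : Fin d, C (b i) * X ^ (i : ℕ)

variable {d : ℕ}


lemma polyOfCoeffs_coeff (b : Fin d → ℂ) (m : ℕ) :
    (polyOfCoeffs b).coeff m = if h : m < d then b ⟨m, h⟩ else 0 := by
  rw [polyOfCoeffs, finset_sum_coeff]
  simp only [coeff_C_mul, coeff_X_pow, mul_ite, mul_one, mul_zero]
  split
  · next h =>
    rw [Finset.sum_eq_single (⟨m, h⟩ : Fin d)]
    · simp
    · intro i _ hi
      have : m ≠ (i : ℕ) := fun e => hi (Fin.ext e.symm)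
      simp [this]
    · simp
  · next h =>
    apply Finset.sum_eq_zero
    intro i _
    have : m ≠ (i : ℕ) := by omega
    simp [this]

lemma degree_polyOfCoeffs_lt (b : Fin d → ℂ) : (polyOfCoeffs b).degree < d := by
  rw [degree_lt_iff_coeff_zero]
  intro m hm
  rw [polyOfCoeffs_coeff]
  have : ¬ m < d := by exact_mod_cast not_lt.2 hm
  simp [this]

lemma polyOfCoeffs_add (b c : Fin d → ℂ) :
    polyOfCoeffs (b + c) = polyOfCoeffs b + polyOfCoeffs c := by
  simp [polyOfCoeffs, ← Finset.sum_add_distrib, add_mul]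

lemma polyOfCoeffs_smul (t : ℂ) (b : Fin d → ℂ) :
    polyOfCoeffs (t • b) = t • polyOfCoeffs b := by
  simp [polyOfCoeffs, Finset.smul_sum, smul_eq_C_mul, mul_assoc]

lemma monicOfCoeffs_eq (a : Fin d → ℂ) :
    monicOfCoeffs d a = X ^ d + polyOfCoeffs a := rfl

lemma degree_monicOfCoeffs (a : Fin d → ℂ) :
    (monicOfCoeffs d a).degree = d := by
  rw [monicOfCoeffs_eq, degree_add_eq_left_of_degree_lt, degree_X_pow]
  rw [degree_X_pow]; exact degree_polyOfCoeffs_lt a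

lemma monic_monicOfCoeffs (a : Fin d → ℂ) : (monicOfCoeffs d a).Monic :=
  monic_X_pow_add (degree_polyOfCoeffs_lt a)

/-- The Sylvester-type linear map `(u,v) ↦` coefficients of `u·p + v·q` below `2d`. -/
noncomputable def sylMap (d : ℕ) (p q : Polynomial ℂ) :
    ((Fin d → ℂ) × (Fin d → ℂ)) →ₗ[ℂ] (Fin (2 * d) → ℂ) where
  toFun uv := fun j => (polyOfCoeffs uv.1 * p + polyOfCoeffs uv.2 * q).coeff (j : ℕ)
  map_add' uv uv' := by
    funext j
    simp [polyOfCoeffs_add, add_mul, coeff_add]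
    ring
  map_smul' t uv := by
    funext j
    simp [polyOfCoeffs_smul, smul_mul_assoc, coeff_smul, smul_eq_mul]
    ring

lemma sylMap_apply (d : ℕ) (p q : Polynomial ℂ) (uv : (Fin d → ℂ) × (Fin d → ℂ)) (j : Fin (2*d)) :
    sylMap d p q uv j = (polyOfCoeffs uv.1 * p + polyOfCoeffs uv.2 * q).coeff (j : ℕ) := rfl

lemma degree_combo_lt (p q : Polynomial ℂ) (hp : p.degree ≤ d) (hq : q.degree ≤ d)
    (u v : Fin d → ℂ) :
    (polyOfCoeffs u * p + polyOfCoeffs v * q).degree < (2 * d : ℕ) := by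
  have h2 : ((2 * d : ℕ) : WithBot ℕ) = (d : WithBot ℕ) + (d : WithBot ℕ) := by
    push_cast; ring
  have key : ∀ (w : Fin d → ℂ) (r : Polynomial ℂ), r.degree ≤ d →
      (polyOfCoeffs w * r).degree < (2 * d : ℕ) := by
    intro w r hr
    refine lt_of_le_of_lt (degree_mul_le _ _) ?_
    rw [h2]
    rcases eq_or_ne r 0 with rfl | hr0
    · simpa using lt_of_le_of_lt (by simp : (polyOfCoeffs w * 0).degree ≤ ⊥)
        (by rw [← h2]; exact_mod_cast WithBot.bot_lt_coe _)
    · calc (polyOfCoeffs w).degree + r.degree ≤ (polyOfCoeffs w).degree + (d : WithBot ℕ) := by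
            exact add_le_add_right hr _
        _ < (d : WithBot ℕ) + (d : WithBot ℕ) := by
            exact WithBot.add_lt_add_right (by exact_mod_cast WithBot.coe_ne_bot)
              (degree_polyOfCoeffs_lt w)
  exact lt_of_le_of_lt (degree_add_le _ _) (max_lt (key u p hp) (key v q hq))

lemma polyOfCoeffs_eq_zero_iff (b : Fin d → ℂ) : polyOfCoeffs b = 0 ↔ b = 0 := by
  constructor
  · intro h
    funext i
    have := polyOfCoeffs_coeff b (i : ℕ)
    rw [h] at this
    simpa [i.isLt] using this.symm
  · rintro rfl
    simp [polyOfCoeffs]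

lemma sylMap_injective_of_coprime (hd : 1 ≤ d) (a b : Fin d → ℂ)
    (h : IsCoprime (monicOfCoeffs d a) (polyOfCoeffs b)) :
    Function.Injective (sylMap d (monicOfCoeffs d a) (polyOfCoeffs b)) := by
  set p := monicOfCoeffs d a with hp
  set q := polyOfCoeffs b with hq
  rw [← LinearMap.ker_eq_bot]
  rw [Submodule.eq_bot_iff]
  rintro ⟨u, v⟩ huv
  rw [LinearMap.mem_ker] at huv
  set U := polyOfCoeffs u with hU
  set V := polyOfCoeffs v with hV
  have hw : U * p + V * q = 0 := by
    ext n
    rcases lt_or_ge n (2 * d) with hn | hn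
    · have := congrFun huv ⟨n, hn⟩
      simpa [sylMap_apply] using this
    · rw [coeff_eq_zero_of_degree_lt, coeff_zero]
      exact lt_of_lt_of_le
        (degree_combo_lt p q (le_of_eq (degree_monicOfCoeffs a))
          (le_of_lt (degree_polyOfCoeffs_lt b)) u v) (by exact_mod_cast Nat.cast_le.2 hn)
  have hpdvd : p ∣ V * q := ⟨-U, by linear_combination hw⟩
  have hVdvd : p ∣ V := h.dvd_of_dvd_mul_right hpdvd
  have hV0 : V = 0 := by
    refine eq_zero_of_dvd_of_degree_lt hVdvd ?_
    rw [degree_monicOfCoeffs]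
    exact degree_polyOfCoeffs_lt v
  have hU0 : U = 0 := by
    have hp0 : p ≠ 0 := (monic_monicOfCoeffs a).ne_zero
    have : U * p = 0 := by rw [hV0] at hw; simpa using hw
    rcases mul_eq_zero.1 this with h1 | h1
    · exact h1
    · exact absurd h1 hp0
  have hu : u = 0 := (polyOfCoeffs_eq_zero_iff u).1 hU0
  have hv : v = 0 := (polyOfCoeffs_eq_zero_iff v).1 hV0
  simp [hu, hv, Prod.ext_iff]

lemma coprime_of_sylMap_surjective (hd : 1 ≤ d) (a b : Fin d → ℂ)
    (h : Function.Surjective (sylMap d (monicOfCoeffs d a) (polyOfCoeffs b))) :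
    IsCoprime (monicOfCoeffs d a) (polyOfCoeffs b) := by
  set p := monicOfCoeffs d a with hp
  set q := polyOfCoeffs b with hq
  obtain ⟨⟨u, v⟩, huv⟩ := h (fun j => (1 : Polynomial ℂ).coeff (j : ℕ))
  refine ⟨polyOfCoeffs u, polyOfCoeffs v, ?_⟩
  set U := polyOfCoeffs u
  set V := polyOfCoeffs v
  have hdeg : (U * p + V * q).degree < (2 * d : ℕ) :=
    degree_combo_lt p q (le_of_eq (degree_monicOfCoeffs a))
      (le_of_lt (degree_polyOfCoeffs_lt b)) u v
  ext n
  rcases lt_or_ge n (2 * d) with hn | hn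
  · have := congrFun huv ⟨n, hn⟩
    simpa [sylMap_apply] using this
  · rw [coeff_eq_zero_of_degree_lt (lt_of_lt_of_le hdeg (by exact_mod_cast Nat.cast_le.2 hn)),
      coeff_eq_zero_of_degree_lt]
    refine lt_of_le_of_lt degree_one_le ?_
    have h0 : 0 < n := by omega
    exact_mod_cast h0

/-- Linear equivalence splitting `ℂ^{2d}` into two copies of `ℂ^d`. -/
noncomputable def splitEquiv (d : ℕ) :
    (Fin (2 * d) → ℂ) ≃ₗ[ℂ] (Fin d → ℂ) × (Fin d → ℂ) :=
  (LinearEquiv.funCongrLeft ℂ ℂ (finSumFinEquiv.trans (finCongr (two_mul d).symm))).trans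
    (LinearEquiv.sumArrowLequivProdArrow _ _ ℂ ℂ)

/-- The Sylvester endomorphism of `ℂ^{2d}` associated to a point of `ℂ^d × ℂ^d`. -/
noncomputable def sylEndo (d : ℕ) (z : (Fin d → ℂ) × (Fin d → ℂ)) :
    (Fin (2 * d) → ℂ) →ₗ[ℂ] (Fin (2 * d) → ℂ) :=
  (sylMap d (monicOfCoeffs d z.1) (polyOfCoeffs z.2)).comp (splitEquiv d).toLinearMap

lemma sylEndo_injective_iff (z : (Fin d → ℂ) × (Fin d → ℂ)) :
    Function.Injective (sylEndo d z) ↔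
      Function.Injective (sylMap d (monicOfCoeffs d z.1) (polyOfCoeffs z.2)) := by
  rw [sylEndo, LinearMap.coe_comp]
  exact (splitEquiv d).toEquiv.injective_comp _

lemma sylEndo_surjective_iff (z : (Fin d → ℂ) × (Fin d → ℂ)) :
    Function.Surjective (sylEndo d z) ↔
      Function.Surjective (sylMap d (monicOfCoeffs d z.1) (polyOfCoeffs z.2)) := by
  rw [sylEndo, LinearMap.coe_comp]
  exact (splitEquiv d).toEquiv.surjective_comp _

lemma det_eq_zero_iff_not_injective (f : (Fin (2*d) → ℂ) →ₗ[ℂ] (Fin (2*d) → ℂ)) :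
    LinearMap.det f = 0 ↔ ¬ Function.Injective f := by
  classical
  rw [← LinearMap.det_toMatrix' f, ← Matrix.exists_mulVec_eq_zero_iff]
  constructor
  · rintro ⟨v, hv, hmul⟩ hinj
    apply hv
    have : f v = 0 := by
      rw [← Matrix.toLin'_toMatrix' f, Matrix.toLin'_apply, hmul]
    exact hinj (by simpa using this)
  · intro hinj
    rw [← LinearMap.ker_eq_bot] at hinj
    obtain ⟨v, hv, hv0⟩ := Submodule.exists_mem_ne_zero_of_ne_bot hinj
    refine ⟨v, hv0, ?_⟩
    rw [LinearMap.mem_ker] at hv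
    rw [← Matrix.toLin'_apply, Matrix.toLin'_toMatrix', hv]

lemma coprime_iff_det_ne_zero (hd : 1 ≤ d) (z : (Fin d → ℂ) × (Fin d → ℂ)) :
    IsCoprime (monicOfCoeffs d z.1) (polyOfCoeffs z.2) ↔
      LinearMap.det (sylEndo d z) ≠ 0 := by
  rw [Ne, det_eq_zero_iff_not_injective, not_not]
  constructor
  · intro h
    exact (sylEndo_injective_iff z).2 (sylMap_injective_of_coprime hd z.1 z.2 h)
  · intro h
    have hsurj : Function.Surjective (sylEndo d z) :=
      (LinearMap.injective_iff_surjective).1 h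
    exact coprime_of_sylMap_surjective hd z.1 z.2 ((sylEndo_surjective_iff z).1 hsurj)

lemma monicOfCoeffs_affine (t : ℂ) (a b : Fin d → ℂ) :
    monicOfCoeffs d ((1 - t) • a + t • b)
      = (1 - t) • monicOfCoeffs d a + t • monicOfCoeffs d b := by
  simp only [monicOfCoeffs_eq, polyOfCoeffs_add, polyOfCoeffs_smul]
  module

lemma polyOfCoeffs_affine (t : ℂ) (a b : Fin d → ℂ) :
    polyOfCoeffs ((1 - t) • a + t • b)
      = (1 - t) • polyOfCoeffs a + t • polyOfCoeffs b := by
  rw [polyOfCoeffs_add, polyOfCoeffs_smul, polyOfCoeffs_smul]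

lemma sylMap_affine (t : ℂ) (p₁ p₂ q₁ q₂ : Polynomial ℂ) :
    sylMap d ((1 - t) • p₁ + t • p₂) ((1 - t) • q₁ + t • q₂)
      = (1 - t) • sylMap d p₁ q₁ + t • sylMap d p₂ q₂ := by
  apply LinearMap.ext
  intro uv
  funext j
  simp only [sylMap_apply, LinearMap.add_apply, LinearMap.smul_apply, Pi.add_apply,
    Pi.smul_apply, smul_eq_mul, mul_add, mul_smul_comm, coeff_add, coeff_smul]
  ring

lemma sylEndo_affine (t : ℂ) (x y : (Fin d → ℂ) × (Fin d → ℂ)) :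
    sylEndo d ((1 - t) • x + t • y) = (1 - t) • sylEndo d x + t • sylEndo d y := by
  simp only [sylEndo, Prod.smul_fst, Prod.smul_snd, Prod.fst_add, Prod.snd_add,
    Prod.smul_fst, Prod.smul_snd]
  rw [monicOfCoeffs_affine, polyOfCoeffs_affine, sylMap_affine,
    LinearMap.add_comp, LinearMap.smul_comp, LinearMap.smul_comp]

/-- Determinant of the pencil of Sylvester endomorphisms, as a polynomial. -/
noncomputable def detPoly (d : ℕ) (x y : (Fin d → ℂ) × (Fin d → ℂ)) : Polynomial ℂ :=
  Matrix.det ((1 - (X : Polynomial ℂ)) • (LinearMap.toMatrix' (sylEndo d x)).map C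
    + (X : Polynomial ℂ) • (LinearMap.toMatrix' (sylEndo d y)).map C)

lemma detPoly_eval (x y : (Fin d → ℂ) × (Fin d → ℂ)) (t : ℂ) :
    (detPoly d x y).eval t = LinearMap.det (sylEndo d ((1 - t) • x + t • y)) := by
  classical
  rw [← LinearMap.det_toMatrix' (sylEndo d ((1 - t) • x + t • y)), sylEndo_affine,
    map_add, map_smul, map_smul]
  rw [detPoly, show (Matrix.det ((1 - (X : Polynomial ℂ)) •
      (LinearMap.toMatrix' (sylEndo d x)).map C
      + (X : Polynomial ℂ) • (LinearMap.toMatrix' (sylEndo d y)).map C)).eval t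
    = (evalRingHom t) (Matrix.det ((1 - (X : Polynomial ℂ)) •
      (LinearMap.toMatrix' (sylEndo d x)).map C
      + (X : Polynomial ℂ) • (LinearMap.toMatrix' (sylEndo d y)).map C)) from rfl,
    RingHom.map_det]
  congr 1
  ext i j
  simp only [RingHom.mapMatrix_apply, Matrix.map_apply, Matrix.add_apply, Matrix.smul_apply,
    smul_eq_mul, coe_evalRingHom, eval_add, eval_mul, eval_sub, eval_one, eval_X, eval_C]
  try ring

/-- the space of pairs `(p,q)` of coprime complex polynomials with `p` monic
of degree `d` and `deg q < d` (i.e. `Hol*_d(S²,S²)`), topologized as a subspace of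
`ℂ^{2d}` via coefficients, is path-connected for every `d ≥ 1`. -/
theorem coprimePairs_isPathConnected (d : ℕ) (hd : 1 ≤ d) :
    IsPathConnected {x : (Fin d → ℂ) × (Fin d → ℂ) |
      IsCoprime (monicOfCoeffs d x.1) (polyOfCoeffs x.2)} := by
  set S := {x : (Fin d → ℂ) × (Fin d → ℂ) |
      IsCoprime (monicOfCoeffs d x.1) (polyOfCoeffs x.2)} with hS
  -- base point : `(X^d, 1)`
  have hone : polyOfCoeffs (fun i : Fin d => if (i : ℕ) = 0 then 1 else 0) = (1 : Polynomial ℂ) := by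
    ext n
    rw [polyOfCoeffs_coeff, coeff_one]
    split
    · simp
    · next h => have : n ≠ 0 := by omega
                simp [this]
  have hbase : ((0 : Fin d → ℂ), fun i : Fin d => if (i : ℕ) = 0 then (1:ℂ) else 0) ∈ S := by
    simp only [hS, Set.mem_setOf_eq, hone]
    exact isCoprime_one_right
  -- any two points of `S` are joined in `S`
  have key : ∀ x ∈ S, ∀ y ∈ S, JoinedIn S x y := by
    intro x hx y hy
    set g : ℂ → (Fin d → ℂ) × (Fin d → ℂ) := fun t => (1 - t) • x + t • y with hg
    have hgc : Continuous g := by fun_prop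
    have hg0 : g 0 = x := by simp [hg]
    have hg1 : g 1 = y := by simp [hg]
    have hdet : ∀ t : ℂ, (detPoly d x y).eval t = LinearMap.det (sylEndo d (g t)) :=
      fun t => detPoly_eval x y t
    have hRne : detPoly d x y ≠ 0 := by
      intro h
      apply (coprime_iff_det_ne_zero hd x).1 hx
      have := hdet 0
      rw [h, eval_zero, hg0] at this
      exact this.symm
    have hbad : {t : ℂ | g t ∉ S} ⊆ {t : ℂ | (detPoly d x y).IsRoot t} := by
      intro t ht
      by_contra hroot
      exact ht ((coprime_iff_det_ne_zero hd (g t)).2 (by rw [← hdet t]; exact hroot))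
    have hcount : Set.Countable {t : ℂ | g t ∉ S} :=
      ((Polynomial.finite_setOf_isRoot hRne).subset hbad).countable
    have hpc : IsPathConnected {t : ℂ | g t ∉ S}ᶜ :=
      hcount.isPathConnected_compl_of_one_lt_rank
        (by rw [Complex.rank_real_complex]; norm_num)
    have h0 : (0 : ℂ) ∈ {t : ℂ | g t ∉ S}ᶜ := by
      simp only [Set.mem_compl_iff, Set.mem_setOf_eq, not_not, hg0]; exact hx
    have h1 : (1 : ℂ) ∈ {t : ℂ | g t ∉ S}ᶜ := by
      simp only [Set.mem_compl_iff, Set.mem_setOf_eq, not_not, hg1]; exact hy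
    obtain ⟨γ, hγ⟩ := hpc.joinedIn 0 h0 1 h1
    refine ⟨(γ.map hgc).cast hg0.symm hg1.symm, ?_⟩
    intro t
    have := hγ t
    simp only [Set.mem_compl_iff, Set.mem_setOf_eq, not_not] at this
    simpa using this
  exact ⟨_, hbase, fun _ hy => key _ hbase _ hy⟩
end

section
/- For coprime polynomials (p,q) with p monic of degree d and deg q < d, and for any finite set S ⊂ ℂ, there exists w ∈ ℂ such that the d roots of p − wq are distinct and disjoint from S; in particular, a generic value of the rational map p/q has exactly d distinct preimages in ℂ. -/
open Polynomial

/-- for coprime `(p,q)` with `p` monic of degree `d` and `deg q < d`, and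
any finite set `S ⊂ ℂ`, there is a value `w ∈ ℂ` such that `p - w·q` has `d` distinct
roots, all avoiding `S`: a generic value of the rational map `p/q` has exactly `d`
distinct preimages in `ℂ`. -/
theorem generic_value_d_distinct_preimages (d : ℕ) (p q : Polynomial ℂ)
    (hp : p.Monic) (hd : p.natDegree = d) (hq : q.degree < (d : ℕ)) (hco : IsCoprime p q)
    (S : Finset ℂ) :
    ∃ w : ℂ, (p - C w * q).roots.Nodup ∧ Multiset.card (p - C w * q).roots = d ∧
      ∀ z ∈ S, (p - C w * q).eval z ≠ 0 := by
  classical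
  have hp0 : p ≠ 0 := hp.ne_zero
  rcases eq_or_ne d 0 with rfl | hd0
  · have hq0 : q = 0 := by
      rw [Nat.cast_zero] at hq
      exact degree_eq_bot.mp (Nat.WithBot.lt_zero_iff.mp hq)
    have hp1 : p = 1 := hp.natDegree_eq_zero.mp hd
    exact ⟨0, by simp [hp1, hq0]⟩
  -- main case d ≥ 1
  set W := derivative p * q - p * derivative q with hWdef
  have hW0 : W ≠ 0 := by
    intro h
    have h1 : derivative p * q = p * derivative q := by
      exact sub_eq_zero.mp h
    have hdvd : p ∣ derivative p * q := ⟨derivative q, h1⟩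
    have hdvd' : p ∣ derivative p := hco.dvd_of_dvd_mul_right hdvd
    have hne : derivative p ≠ 0 := by
      intro h0
      have := natDegree_eq_zero_of_derivative_eq_zero h0
      omega
    have h2 := natDegree_le_of_dvd hdvd' hne
    have h3 := natDegree_derivative_lt (p := p) (by omega)
    omega
  set B : Finset ℂ := (W.roots.toFinset ∪ S).image (fun z => p.eval z / q.eval z) with hB
  obtain ⟨w, hw⟩ := Infinite.exists_notMem_finset B
  set f := p - C w * q with hf
  have hdegq : (C w * q).degree < p.degree := by
    calc (C w * q).degree ≤ q.degree := by
          rcases eq_or_ne w 0 with rfl | hw0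
          · simp
          · rw [degree_C_mul (by exact hw0)]
        _ < (d : ℕ) := hq
        _ = p.degree := by rw [degree_eq_natDegree hp0, hd]
  have hfm : f.Monic := by
    have := hp.add_of_left (q := -(C w * q)) (by simpa using hdegq)
    simpa [hf, sub_eq_add_neg] using this
  have hf0 : f ≠ 0 := hfm.ne_zero
  have hfdeg : f.natDegree = d := by
    have : f.degree = p.degree := degree_sub_eq_left_of_degree_lt hdegq
    rw [natDegree_eq_of_degree_eq this, hd]
  -- key: no element of W.roots.toFinset ∪ S is a root of f
  have key : ∀ z ∈ W.roots.toFinset ∪ S, f.eval z ≠ 0 := by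
    intro z hz h0
    have hpz : p.eval z = w * q.eval z := by
      have : p.eval z - w * q.eval z = 0 := by simpa [hf] using h0
      linear_combination this
    have hqz : q.eval z ≠ 0 := by
      intro hq0
      have hpz0 : p.eval z = 0 := by rw [hpz, hq0, mul_zero]
      obtain ⟨a, b, hab⟩ := hco
      have := congrArg (eval z) hab
      simp [hpz0, hq0] at this
    apply hw
    rw [hB]
    refine Finset.mem_image.mpr ⟨z, hz, ?_⟩
    field_simp [hpz]
    linear_combination hpz
  have hsep : f.Separable := by
    rw [Separable, ← EuclideanDomain.gcd_isUnit_iff]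
    by_contra hu
    have hdeg : (EuclideanDomain.gcd f (derivative f)).degree ≠ 0 := by
      intro h; exact hu (isUnit_iff_degree_eq_zero.mpr h)
    obtain ⟨z, hz⟩ := IsAlgClosed.exists_root _ hdeg
    have hzf : f.eval z = 0 :=
      eval_eq_zero_of_dvd_of_eval_eq_zero (EuclideanDomain.gcd_dvd_left _ _) hz
    have hzf' : (derivative f).eval z = 0 :=
      eval_eq_zero_of_dvd_of_eval_eq_zero (EuclideanDomain.gcd_dvd_right _ _) hz
    have hpz : p.eval z = w * q.eval z := by
      have : p.eval z - w * q.eval z = 0 := by simpa [hf] using hzf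
      linear_combination this
    have hpz' : (derivative p).eval z = w * (derivative q).eval z := by
      have : (derivative p).eval z - w * (derivative q).eval z = 0 := by
        simpa [hf, derivative_sub, derivative_C_mul] using hzf'
      linear_combination this
    have hWz : W.eval z = 0 := by
      simp [hWdef, hpz, hpz']; ring
    exact key z (Finset.mem_union_left _ (by
      simp [Multiset.mem_toFinset, mem_roots hW0, IsRoot, hWz])) hzf
  refine ⟨w, nodup_roots hsep, ?_, fun z hz => key z (Finset.mem_union_right _ hz)⟩
  rw [splits_iff_card_roots.mp (IsAlgClosed.splits f), hfdeg]
end
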